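/- Scaling property of the CDT: Let I₁ be a probability density with CDT Î₁ with respect to reference I₀, realized by the transport map f₁. For a > 0, define I_a(x) = a·I₁(a·x). Then the transport map of I_a is f_a(x) = f₁(x)/a, and consequently the CDT of I_a satisfies Î_a(x) = (Î₁(x) − x(a−1)√(I₀(x)))/a for all x in the domain of I₀. -/

import Mathlib

open MeasureTheory Set

/-- Change of variables for `Iic` integrals under positive scaling. -/
lemma iic_scale (I₁ : ℝ → ℝ) (hI₁int : Integrable I₁) {a : ℝ} (ha : 0 < a) (c : ℝ) :
    ∫ τ in Iic c, a * I₁ (a * τ) = ∫ τ in Iic (a * c), I₁ τ := by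
  have key : ∀ τ : ℝ, (Iic c).indicator (fun t => a * I₁ (a * t)) τ
      = a * (Iic (a * c)).indicator I₁ (a * τ) := by
    intro τ
    by_cases h : τ ≤ c
    · have h' : a * τ ≤ a * c := mul_le_mul_of_nonneg_left h ha.le
      simp [indicator, h, h']
    · have h' : ¬ a * τ ≤ a * c := fun hc => h (le_of_mul_le_mul_left hc ha)
      simp [indicator, h, h']
  rw [← integral_indicator measurableSet_Iic, ← integral_indicator measurableSet_Iic]
  simp_rw [key]
  rw [integral_const_mul, Measure.integral_comp_mul_left ((Iic (a*c)).indicator I₁) a]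
  rw [abs_of_pos (inv_pos.mpr ha), smul_eq_mul]
  field_simp

theorem cdt_scaling
    (X Y : Set ℝ) (hX : X.OrdConnected) (hY : Y.OrdConnected)
    (I₀ I₁ : ℝ → ℝ) (a : ℝ) (ha : 0 < a)
    (hI₀pos : ∀ x ∈ X, 0 < I₀ x)
    (hI₁pos : ∀ y ∈ Y, 0 < I₁ y) (hI₁zero : ∀ y ∉ Y, I₁ y = 0)
    (hI₀int : IntegrableOn I₀ X) (hI₀tot : ∫ τ in X, I₀ τ = 1)
    (hI₁int : Integrable I₁) (hI₁tot : ∫ τ : ℝ, I₁ τ = 1)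
    (f₁ fa : ℝ → ℝ)
    (hf₁maps : MapsTo f₁ X Y) (hfamaps : MapsTo fa X ((fun y => y / a) '' Y))
    (hf₁ : ∀ x ∈ X, ∫ τ in Iic (f₁ x), I₁ τ = ∫ τ in sInf X..x, I₀ τ)
    (hfa : ∀ x ∈ X, ∫ τ in Iic (fa x), a * I₁ (a * τ) = ∫ τ in sInf X..x, I₀ τ) :
    ∀ x ∈ X,
      fa x = f₁ x / a ∧
      (fa x - x) * Real.sqrt (I₀ x)
        = ((f₁ x - x) * Real.sqrt (I₀ x) - x * (a - 1) * Real.sqrt (I₀ x)) / a := by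
  intro x hx
  have heq : ∫ τ in Iic (a * fa x), I₁ τ = ∫ τ in Iic (f₁ x), I₁ τ := by
    rw [← iic_scale I₁ hI₁int ha, hfa x hx, hf₁ x hx]
  -- a * fa x ∈ Y
  obtain ⟨y, hyY, hyeq⟩ := hfamaps hx
  have hafa : a * fa x ∈ Y := by
    have : a * fa x = y := by rw [← hyeq]; field_simp
    rwa [this]
  have hf₁Y : f₁ x ∈ Y := hf₁maps hx
  -- strict monotonicity argument: a * fa x = f₁ x
  have hmain : a * fa x = f₁ x := by
    by_contra hne
    have key : ∀ u v : ℝ, u ∈ Y → v ∈ Y → u < v →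
        (∫ τ in Iic u, I₁ τ) < ∫ τ in Iic v, I₁ τ := by
      intro u v huY hvY huv
      have hdiff : (∫ τ in Iic v, I₁ τ) - ∫ τ in Iic u, I₁ τ = ∫ τ in u..v, I₁ τ :=
        intervalIntegral.integral_Iic_sub_Iic hI₁int.integrableOn hI₁int.integrableOn
      have hpos : 0 < ∫ τ in u..v, I₁ τ := by
        apply intervalIntegral.intervalIntegral_pos_of_pos_on
          hI₁int.intervalIntegrable
        · intro t ht
          exact hI₁pos t (hY.out huY hvY ⟨ht.1.le, ht.2.le⟩)
        · exact huv
      linarith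
    rcases lt_or_gt_of_ne hne with h | h
    · exact absurd heq (ne_of_lt (key _ _ hafa hf₁Y h))
    · exact absurd heq.symm (ne_of_lt (key _ _ hf₁Y hafa h))
  have h1 : fa x = f₁ x / a := by field_simp [← hmain]; linarith [hmain]
  refine ⟨h1, ?_⟩
  rw [h1]
  field_simp
  ring
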